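/- For every integer m ≥ 1, every N ∈ ℕ and all constants c₀, c₁, λ > 0 and γ > m, there exists B₀ > 0 with the following property: for every design problem (𝒳, ℬ, f, ℓ, (ξ[β])_{β∈ℬ}) as in the context that satisfies condition (2.4/3.1) with constants c₁, γ, condition (2.5) with constant λ, and condition (2.9) with constant c₀, if ℓ(β_max) − ℓ(β_min) ≥ B₀, then every design ξ* maximizing the standardized maximin D-criterion Φ over all designs is supported at more than N points. -/

import Mathlib

open scoped BigOperators

/-- An approximate design: a finitely supported probability measure on `X`,
given by its support points and positive weights summing to one. -/
structure Design (X : Type*) where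
  support : Finset X
  w : X → ℝ
  w_pos : ∀ x ∈ support, 0 < w x
  w_zero : ∀ x ∉ support, w x = 0
  sum_one : ∑ x ∈ support, w x = 1

/-- Information matrix `M(ξ,β) = ∑ₖ wₖ f(xₖ,β) f(xₖ,β)ᵀ`. -/
noncomputable def infoMat {X : Type*} {m : ℕ} (f : X → ℝ → Fin m → ℝ)
    (ξ : Design X) (β : ℝ) : Matrix (Fin m) (Fin m) ℝ :=
  ∑ x ∈ ξ.support, ξ.w x • Matrix.vecMulVec (f x β) (f x β)

/-- `I_m(x₁,…,x_m,β) = det[f(x₁,β) ⋯ f(x_m,β)]²`. -/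
noncomputable def detIm {X : Type*} {m : ℕ} (f : X → ℝ → Fin m → ℝ)
    (xs : Fin m → X) (β : ℝ) : ℝ :=
  (Matrix.det (Matrix.of fun i j => f (xs j) β i)) ^ 2

section Aux

open Finset Matrix

variable {X : Type*} {m : ℕ}

/-- Cauchy–Binet type identity in "function" form. -/
lemma cb_identity (s : Finset X) (w : X → ℝ) (v : X → Fin m → ℝ) :
    (m.factorial : ℝ) * (∑ x ∈ s, w x • Matrix.vecMulVec (v x) (v x)).det
      = ∑ g ∈ Fintype.piFinset (fun _ : Fin m => s),
          (∏ i, w (g i)) * (Matrix.of fun i j => v (g i) j).det ^ 2 := by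
  classical
  set S := Fintype.piFinset (fun _ : Fin m => s) with hS
  have hM : (∑ x ∈ s, w x • Matrix.vecMulVec (v x) (v x))
      = Matrix.of (fun i => ∑ x ∈ s, (w x * v x i) • v x) := by
    ext i j
    simp [Matrix.sum_apply, Matrix.vecMulVec_apply, Finset.sum_apply, mul_assoc]
  have step1 : (∑ x ∈ s, w x • Matrix.vecMulVec (v x) (v x)).det
      = ∑ g ∈ S, (∏ i, (w (g i) * v (g i) i)) *
          (Matrix.of fun i j => v (g i) j).det := by
    rw [hM]
    have e1 : (Matrix.of (fun i => ∑ x ∈ s, (w x * v x i) • v x)).det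
        = (Matrix.detRowAlternating (R := ℝ) (n := Fin m)).toMultilinearMap
            (fun i => ∑ x ∈ s, (w x * v x i) • v x) := rfl
    rw [e1, MultilinearMap.map_sum_finset]
    refine Finset.sum_congr rfl fun g hg => ?_
    have h2 := (Matrix.detRowAlternating (R := ℝ) (n := Fin m)).toMultilinearMap.map_smul_univ
      (fun i => w (g i) * v (g i) i) (fun i => v (g i))
    rw [h2]
    simp only [smul_eq_mul]
    rfl
  have hperm : ∀ σ : Equiv.Perm (Fin m),
      ∑ g ∈ S, (∏ i, (w (g i) * v (g i) i)) * (Matrix.of fun i j => v (g i) j).det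
        = ∑ g ∈ S, (∏ i, w (g i)) * (Matrix.of fun i j => v (g i) j).det *
            ((Equiv.Perm.sign σ : ℤ) • ∏ i, v (g i) (σ i)) := by
    intro σ
    refine Finset.sum_equiv
      (⟨fun g => fun i => g (σ i), fun g => fun i => g (σ.symm i),
        fun g => by funext i; simp, fun g => by funext i; simp⟩ :
        (Fin m → X) ≃ (Fin m → X)) (fun g => ?_) (fun g hg => ?_)
    · simp only [hS, Fintype.mem_piFinset, Equiv.coe_fn_mk]
      constructor
      · intro h i; exact h _
      · intro h i
        have := h (σ.symm i); simpa using this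
    · simp only [Equiv.coe_fn_mk]
      have h1 : (∏ i, w (g (σ i))) = ∏ i, w (g i) :=
        Equiv.prod_comp σ (fun i => w (g i))
      have h2 : (∏ i, v (g (σ i)) (σ i)) = ∏ i, v (g i) i :=
        Equiv.prod_comp σ (fun i => v (g i) i)
      have h3 : (Matrix.of fun i j => v (g (σ i)) j).det
          = (Equiv.Perm.sign σ : ℤ) * (Matrix.of fun i j => v (g i) j).det := by
        have he : (Matrix.of fun i j => v (g (σ i)) j)
            = (Matrix.of fun i j => v (g i) j).submatrix σ id := rfl
        rw [he, Matrix.det_permute]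
      rw [h1, h2, h3, Finset.prod_mul_distrib]
      rcases Int.units_eq_one_or (Equiv.Perm.sign σ) with h | h <;>
        · rw [h]; push_cast; simp only [one_smul, neg_smul]; ring
  have hCg : ∀ g : Fin m → X, (Matrix.of fun i j => v (g i) j).det
      = ∑ σ : Equiv.Perm (Fin m), (Equiv.Perm.sign σ : ℤ) • ∏ i, v (g i) (σ i) := by
    intro g
    have htr : ((Matrix.of fun i j => v (g j) i) : Matrix (Fin m) (Fin m) ℝ)ᵀ
        = (Matrix.of fun i j => v (g i) j) := rfl
    rw [← htr, Matrix.det_transpose, Matrix.det_apply]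
    rfl
  have step2 : ∑ g ∈ S, (∏ i, w (g i)) * (Matrix.of fun i j => v (g i) j).det ^ 2
      = (m.factorial : ℝ) * ∑ g ∈ S, (∏ i, (w (g i) * v (g i) i)) *
          (Matrix.of fun i j => v (g i) j).det := by
    calc ∑ g ∈ S, (∏ i, w (g i)) * (Matrix.of fun i j => v (g i) j).det ^ 2
        = ∑ g ∈ S, ∑ σ : Equiv.Perm (Fin m),
            (∏ i, w (g i)) * (Matrix.of fun i j => v (g i) j).det *
              ((Equiv.Perm.sign σ : ℤ) • ∏ i, v (g i) (σ i)) := by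
          refine Finset.sum_congr rfl fun g hg => ?_
          rw [sq, ← mul_assoc]
          nth_rewrite 2 [hCg g]
          rw [Finset.mul_sum]
      _ = ∑ σ : Equiv.Perm (Fin m), ∑ g ∈ S,
            (∏ i, w (g i)) * (Matrix.of fun i j => v (g i) j).det *
              ((Equiv.Perm.sign σ : ℤ) • ∏ i, v (g i) (σ i)) := Finset.sum_comm
      _ = ∑ _σ : Equiv.Perm (Fin m), ∑ g ∈ S, (∏ i, (w (g i) * v (g i) i)) *
            (Matrix.of fun i j => v (g i) j).det :=
          Finset.sum_congr rfl fun σ _ => (hperm σ).symm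
      _ = (m.factorial : ℝ) * ∑ g ∈ S, (∏ i, (w (g i) * v (g i) i)) *
            (Matrix.of fun i j => v (g i) j).det := by
          rw [Finset.sum_const, Finset.card_univ, Fintype.card_perm, Fintype.card_fin,
            nsmul_eq_mul]
  rw [step1, ← step2]

lemma Design.w_nonneg (ξ : Design X) (x : X) : 0 ≤ ξ.w x := by
  by_cases h : x ∈ ξ.support
  · exact (ξ.w_pos x h).le
  · rw [ξ.w_zero x h]

lemma detIm_nonneg (f : X → ℝ → Fin m → ℝ) (xs : Fin m → X) (β : ℝ) :
    0 ≤ detIm f xs β := by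
  rw [detIm]; positivity

lemma detIm_eq (f : X → ℝ → Fin m → ℝ) (g : Fin m → X) (β : ℝ) :
    detIm f g β = (Matrix.of fun i j => f (g i) β j).det ^ 2 := by
  rw [detIm]
  congr 1
  have htr : ((Matrix.of fun i j => f (g j) β i) : Matrix (Fin m) (Fin m) ℝ)ᵀ
      = (Matrix.of fun i j => f (g i) β j) := rfl
  rw [← htr, Matrix.det_transpose]

lemma factorial_mul_det_infoMat (f : X → ℝ → Fin m → ℝ) (ξ : Design X) (β : ℝ) :
    (m.factorial : ℝ) * (infoMat f ξ β).det
      = ∑ g ∈ Fintype.piFinset (fun _ : Fin m => ξ.support),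
          (∏ i, ξ.w (g i)) * detIm f g β := by
  rw [infoMat, cb_identity]
  exact Finset.sum_congr rfl fun g _ => by rw [detIm_eq]

lemma det_infoMat_nonneg (f : X → ℝ → Fin m → ℝ) (ξ : Design X) (β : ℝ) :
    0 ≤ (infoMat f ξ β).det := by
  have h := factorial_mul_det_infoMat f ξ β
  have hs : 0 ≤ ∑ g ∈ Fintype.piFinset (fun _ : Fin m => ξ.support),
      (∏ i, ξ.w (g i)) * detIm f g β :=
    Finset.sum_nonneg fun g _ => mul_nonneg
      (Finset.prod_nonneg fun i _ => ξ.w_nonneg _) (detIm_nonneg f g β)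
  have hf : (0:ℝ) < m.factorial := by positivity
  nlinarith [h, hs, hf]

lemma det_infoMat_le_sum (f : X → ℝ → Fin m → ℝ) (ξ : Design X) (β : ℝ) :
    (infoMat f ξ β).det
      ≤ ∑ g ∈ Fintype.piFinset (fun _ : Fin m => ξ.support),
          (∏ i, ξ.w (g i)) * detIm f g β := by
  rw [← factorial_mul_det_infoMat]
  have h1 : (1:ℝ) ≤ m.factorial := by exact_mod_cast m.factorial_pos
  nlinarith [det_infoMat_nonneg f ξ β]

lemma sum_prod_w (ξ : Design X) :
    ∑ g ∈ Fintype.piFinset (fun _ : Fin m => ξ.support), (∏ i, ξ.w (g i)) = 1 := by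
  rw [← Finset.prod_univ_sum]
  simp [ξ.sum_one]

end Aux

set_option maxHeartbeats 2000000

/-- For every `m ≥ 1`, `N`, and constants `c₀, c₁, λ > 0`, `γ > m`, there is `B₀ > 0` such
that for every design problem satisfying (2.4/3.1), (2.5) and (2.9), if
`ℓ(β_max) − ℓ(β_min) ≥ B₀` then any standardized maximin `D`-optimal design has more than
`N` support points. -/
theorem maximin_support_points_unbounded
    (m : ℕ) (hm : 1 ≤ m) (N : ℕ) (c₀ c₁ lam γ : ℝ)
    (hc₀ : 0 < c₀) (hc₁ : 0 < c₁) (hlam : 0 < lam) (hγ : (m : ℝ) < γ) :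
    ∃ B₀ : ℝ, 0 < B₀ ∧
      ∀ (X : Type) [Nonempty X] (βmin βmax : ℝ), βmin < βmax →
        ∀ (f : X → ℝ → Fin m → ℝ) (ℓ : ℝ → ℝ) (ξopt : ℝ → Design X),
          -- ℓ is a nondecreasing continuous scale function on ℬ
          MonotoneOn ℓ (Set.Icc βmin βmax) →
          ContinuousOn ℓ (Set.Icc βmin βmax) →
          -- local D-optimality of the designs ξ[β], with nonsingular information matrix
          (∀ β ∈ Set.Icc βmin βmax, 0 < (infoMat f (ξopt β) β).det) →
          (∀ β ∈ Set.Icc βmin βmax, ∀ ξ : Design X,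
              (infoMat f ξ β).det ≤ (infoMat f (ξopt β) β).det) →
          -- condition (2.4)/(3.1):  Q(β,β̃) ≤ c₁ |ℓ(β) − ℓ(β̃)|^(−γ)
          (∀ β ∈ Set.Icc βmin βmax, ∀ b ∈ Set.Icc βmin βmax,
              ((infoMat f (ξopt b) β).det / (infoMat f (ξopt β) β).det)
                * |ℓ β - ℓ b| ^ γ ≤ c₁) →
          -- condition (2.5):  Q(β,β̃) ≥ 1/2 whenever |ℓ(β) − ℓ(β̃)| ≤ λ
          (∀ β ∈ Set.Icc βmin βmax, ∀ b ∈ Set.Icc βmin βmax,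
              |ℓ β - ℓ b| ≤ lam →
              (1 : ℝ) / 2 ≤ (infoMat f (ξopt b) β).det / (infoMat f (ξopt β) β).det) →
          -- condition (2.9)
          (∀ xs : Fin m → X, ∃ b : Fin m → ℝ,
              (∀ j, b j ∈ Set.Icc βmin βmax) ∧
              ∀ β ∈ Set.Icc βmin βmax,
                detIm f xs β ≤ c₀ * ∑ j, (infoMat f (ξopt (b j)) β).det) →
          -- ℓ(β_max) − ℓ(β_min) sufficiently large
          B₀ ≤ ℓ βmax - ℓ βmin →
          -- any maximizer of the standardized maximin criterion Φ
          ∀ ξstar : Design X,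
            (∀ ξ : Design X,
              (⨅ β : Set.Icc βmin βmax,
                  (infoMat f ξ (β : ℝ)).det / (infoMat f (ξopt (β : ℝ)) (β : ℝ)).det) ≤
              (⨅ β : Set.Icc βmin βmax,
                  (infoMat f ξstar (β : ℝ)).det / (infoMat f (ξopt (β : ℝ)) (β : ℝ)).det)) →
            N < ξstar.support.card := by
  classical
  have hmpos : (0:ℝ) < m := by exact_mod_cast hm
  have hγ0 : (0:ℝ) ≤ γ := le_trans (Nat.cast_nonneg m) hγ.le
  have hγm : (0:ℝ) < γ - m := sub_pos.2 hγ
  set K : ℕ := N ^ m * m with hK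
  set A : ℝ := c₀ * c₁ * m * (2 * ((K:ℝ) + 1)) ^ γ with hA
  have hrpowK : (0:ℝ) < (2 * ((K:ℝ) + 1)) ^ γ := Real.rpow_pos_of_pos (by positivity) γ
  have hApos : 0 < A := by rw [hA]; positivity
  set C : ℝ := 2 * A * (1 / lam + 2) ^ m with hC
  have hCpos : 0 < C := by
    rw [hC]
    have h1 : (0:ℝ) < 1 / lam + 2 := by positivity
    positivity
  refine ⟨1 + (C + 1) ^ (γ - (m:ℝ))⁻¹, by positivity, ?_⟩
  intro X _ βmin βmax hβ f ℓ ξopt hmono hcont hdetpos hlocopt h24 h25 h29 hL ξstar hopt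
  by_contra hcard
  push_neg at hcard
  -- basic setup
  set L : ℝ := ℓ βmax - ℓ βmin with hLdef
  have hrpow1 : (0:ℝ) ≤ (C + 1) ^ (γ - (m:ℝ))⁻¹ := Real.rpow_nonneg (by positivity) _
  have hL1 : (1:ℝ) ≤ L := by linarith
  have hLpos : (0:ℝ) < L := by linarith
  have hLC : C < L ^ (γ - (m:ℝ)) := by
    have h1 : ((C + 1) ^ (γ - (m:ℝ))⁻¹) ^ (γ - (m:ℝ)) = C + 1 :=
      Real.rpow_inv_rpow (by positivity) hγm.ne'
    have h2 : (C + 1) ^ (γ - (m:ℝ))⁻¹ ≤ L := by linarith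
    have h3 := Real.rpow_le_rpow hrpow1 h2 hγm.le
    rw [h1] at h3
    linarith
  have hmm : βmin ∈ Set.Icc βmin βmax := Set.mem_Icc.mpr ⟨le_rfl, hβ.le⟩
  have hmx : βmax ∈ Set.Icc βmin βmax := Set.mem_Icc.mpr ⟨hβ.le, le_rfl⟩
  haveI : Nonempty (Set.Icc βmin βmax) := ⟨⟨βmin, hmm⟩⟩
  have hbdd : ∀ ξ : Design X, BddBelow (Set.range fun β : Set.Icc βmin βmax =>
      (infoMat f ξ (β : ℝ)).det / (infoMat f (ξopt (β : ℝ)) (β : ℝ)).det) := by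
    intro ξ
    refine ⟨0, ?_⟩
    rintro y ⟨β, rfl⟩
    exact div_nonneg (det_infoMat_nonneg f ξ _) (hdetpos _ β.2).le
  choose bfun hbmem hbbd using h29
  set δ : ℝ := L / (2 * ((K:ℝ) + 1)) with hδdef
  have hδpos : 0 < δ := by rw [hδdef]; positivity
  -- the bad set of scale values
  set T : Finset ℝ := ((Fintype.piFinset fun _ : Fin m => ξstar.support) ×ˢ
      (Finset.univ : Finset (Fin m))).image (fun p => ℓ (bfun p.1 p.2)) with hT
  have hTK : T.card ≤ K := by
    calc T.card ≤ ((Fintype.piFinset fun _ : Fin m => ξstar.support) ×ˢ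
        (Finset.univ : Finset (Fin m))).card := Finset.card_image_le
      _ = (Fintype.piFinset fun _ : Fin m => ξstar.support).card * m := by
          rw [Finset.card_product]; simp
      _ = ξstar.support.card ^ m * m := by rw [Fintype.card_piFinset_const]
      _ ≤ N ^ m * m := Nat.mul_le_mul_right _ (Nat.pow_le_pow_left hcard m)
  -- pigeonhole: a midpoint far from all bad values
  obtain ⟨i₀, hi₀, hfar⟩ : ∃ i ∈ Finset.range (K + 1), ∀ s ∈ T,
      δ ≤ |(ℓ βmin + (2 * (i:ℝ) + 1) * δ) - s| := by
    by_contra hno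
    push_neg at hno
    set pick : ℕ → ℝ := fun i =>
      if h : ∃ s ∈ T, |(ℓ βmin + (2 * (i:ℝ) + 1) * δ) - s| < δ then h.choose else 0
      with hpickdef
    have hpick : ∀ i ∈ Finset.range (K + 1), pick i ∈ T ∧
        |(ℓ βmin + (2 * (i:ℝ) + 1) * δ) - pick i| < δ := by
      intro i hi
      obtain ⟨s, hs1, hs2⟩ := hno i hi
      have hex : ∃ s ∈ T, |(ℓ βmin + (2 * (i:ℝ) + 1) * δ) - s| < δ := ⟨s, hs1, hs2⟩
      simp only [hpickdef, dif_pos hex]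
      exact ⟨hex.choose_spec.1, hex.choose_spec.2⟩
    have hinj : Set.InjOn pick (Finset.range (K + 1)) := by
      intro i hi j hj hij
      by_contra hne
      have h1 := (hpick i hi).2
      have h2 := (hpick j hj).2
      rw [hij] at h1
      have habs : |(ℓ βmin + (2 * (i:ℝ) + 1) * δ) - (ℓ βmin + (2 * (j:ℝ) + 1) * δ)|
          < 2 * δ := by
        calc |(ℓ βmin + (2 * (i:ℝ) + 1) * δ) - (ℓ βmin + (2 * (j:ℝ) + 1) * δ)|
            ≤ |(ℓ βmin + (2 * (i:ℝ) + 1) * δ) - pick j|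
              + |pick j - (ℓ βmin + (2 * (j:ℝ) + 1) * δ)| := abs_sub_le _ _ _
          _ < δ + δ := by
              rw [abs_sub_comm (pick j)]
              exact add_lt_add h1 h2
          _ = 2 * δ := by ring
      have hone : (1:ℝ) ≤ |(i:ℝ) - (j:ℝ)| := by
        rcases lt_or_gt_of_ne hne with h | h
        · have : (i:ℝ) + 1 ≤ j := by exact_mod_cast h
          rw [abs_sub_comm, abs_of_nonneg (by linarith)]; linarith
        · have : (j:ℝ) + 1 ≤ i := by exact_mod_cast h
          rw [abs_of_nonneg (by linarith)]; linarith
      have heq : |(ℓ βmin + (2 * (i:ℝ) + 1) * δ) - (ℓ βmin + (2 * (j:ℝ) + 1) * δ)|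
          = |(i:ℝ) - (j:ℝ)| * (2 * δ) := by
        have : (ℓ βmin + (2 * (i:ℝ) + 1) * δ) - (ℓ βmin + (2 * (j:ℝ) + 1) * δ)
            = ((i:ℝ) - (j:ℝ)) * (2 * δ) := by ring
        rw [this, abs_mul, abs_of_nonneg (by positivity : (0:ℝ) ≤ 2 * δ)]
      nlinarith
    have hcardle := Finset.card_le_card_of_injOn pick (fun i hi => (hpick i hi).1) hinj
    rw [Finset.card_range] at hcardle
    omega
  -- the probe parameter
  have hiK : (i₀:ℝ) ≤ K := by
    have := Finset.mem_range.1 hi₀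
    exact_mod_cast Nat.lt_succ_iff.1 this
  have htmem : ℓ βmin + (2 * (i₀:ℝ) + 1) * δ ∈ Set.Icc (ℓ βmin) (ℓ βmax) := by
    constructor
    · nlinarith
    · have h3 : (2 * ((K:ℝ)) + 2) * δ = L := by
        rw [hδdef]; field_simp
      have h4 : ℓ βmin + L = ℓ βmax := by rw [hLdef]; ring
      nlinarith
  obtain ⟨βh, hβhmem, hβhval⟩ := intermediate_value_Icc hβ.le hcont htmem
  have hDh : 0 < (infoMat f (ξopt βh) βh).det := hdetpos βh hβhmem
  have hδγpos : 0 < δ ^ γ := Real.rpow_pos_of_pos hδpos γ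
  -- upper bound for the maximin value of ξstar
  have hdetb : ∀ g ∈ Fintype.piFinset (fun _ : Fin m => ξstar.support), ∀ j : Fin m,
      (infoMat f (ξopt (bfun g j)) βh).det
        ≤ c₁ / δ ^ γ * (infoMat f (ξopt βh) βh).det := by
    intro g hg j
    have hmemT : ℓ (bfun g j) ∈ T :=
      Finset.mem_image.2 ⟨(g, j), Finset.mem_product.2 ⟨hg, Finset.mem_univ _⟩, rfl⟩
    have hfar' : δ ≤ |ℓ βh - ℓ (bfun g j)| := by rw [hβhval]; exact hfar _ hmemT
    have h24' := h24 βh hβhmem (bfun g j) (hbmem g j)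
    have hQnn : 0 ≤ (infoMat f (ξopt (bfun g j)) βh).det / (infoMat f (ξopt βh) βh).det :=
      div_nonneg (det_infoMat_nonneg f _ _) hDh.le
    have hpow : δ ^ γ ≤ |ℓ βh - ℓ (bfun g j)| ^ γ :=
      Real.rpow_le_rpow hδpos.le hfar' hγ0
    have hQ : (infoMat f (ξopt (bfun g j)) βh).det / (infoMat f (ξopt βh) βh).det
        ≤ c₁ / δ ^ γ := by
      rw [le_div_iff₀ hδγpos]
      calc (infoMat f (ξopt (bfun g j)) βh).det / (infoMat f (ξopt βh) βh).det * δ ^ γ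
          ≤ (infoMat f (ξopt (bfun g j)) βh).det / (infoMat f (ξopt βh) βh).det
            * |ℓ βh - ℓ (bfun g j)| ^ γ := mul_le_mul_of_nonneg_left hpow hQnn
        _ ≤ c₁ := h24'
    calc (infoMat f (ξopt (bfun g j)) βh).det
        = (infoMat f (ξopt (bfun g j)) βh).det / (infoMat f (ξopt βh) βh).det
            * (infoMat f (ξopt βh) βh).det := (div_mul_cancel₀ _ hDh.ne').symm
      _ ≤ c₁ / δ ^ γ * (infoMat f (ξopt βh) βh).det :=
          mul_le_mul_of_nonneg_right hQ hDh.le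
  have hupper : (infoMat f ξstar βh).det
      ≤ c₀ * m * (c₁ / δ ^ γ) * (infoMat f (ξopt βh) βh).det := by
    calc (infoMat f ξstar βh).det
        ≤ ∑ g ∈ Fintype.piFinset (fun _ : Fin m => ξstar.support),
            (∏ i, ξstar.w (g i)) * detIm f g βh := det_infoMat_le_sum f ξstar βh
      _ ≤ ∑ g ∈ Fintype.piFinset (fun _ : Fin m => ξstar.support),
            (∏ i, ξstar.w (g i)) *
              (c₀ * ((m:ℝ) * (c₁ / δ ^ γ * (infoMat f (ξopt βh) βh).det))) := by
          refine Finset.sum_le_sum fun g hg => ?_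
          refine mul_le_mul_of_nonneg_left ?_
            (Finset.prod_nonneg fun i _ => ξstar.w_nonneg _)
          calc detIm f g βh ≤ c₀ * ∑ j, (infoMat f (ξopt (bfun g j)) βh).det :=
                hbbd g βh hβhmem
            _ ≤ c₀ * ((m:ℝ) * (c₁ / δ ^ γ * (infoMat f (ξopt βh) βh).det)) := by
                refine mul_le_mul_of_nonneg_left ?_ hc₀.le
                calc ∑ j : Fin m, (infoMat f (ξopt (bfun g j)) βh).det
                    ≤ ∑ _j : Fin m, c₁ / δ ^ γ * (infoMat f (ξopt βh) βh).det :=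
                      Finset.sum_le_sum fun j _ => hdetb g hg j
                  _ = (m:ℝ) * (c₁ / δ ^ γ * (infoMat f (ξopt βh) βh).det) := by
                      rw [Finset.sum_const, Finset.card_univ, Fintype.card_fin,
                        nsmul_eq_mul]
      _ = c₀ * m * (c₁ / δ ^ γ) * (infoMat f (ξopt βh) βh).det := by
          rw [← Finset.sum_mul, sum_prod_w ξstar]; ring
  have hΦstar : (⨅ β : Set.Icc βmin βmax,
      (infoMat f ξstar (β : ℝ)).det / (infoMat f (ξopt (β : ℝ)) (β : ℝ)).det)
        ≤ c₀ * m * (c₁ / δ ^ γ) := by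
    refine le_trans (ciInf_le (hbdd ξstar) ⟨βh, hβhmem⟩) ?_
    rw [div_le_iff₀ hDh]
    exact hupper
  -- the λ-net and the mixture design
  set r : ℕ := ⌈L / lam⌉₊ with hr
  have hnet : ∀ j : ℕ, ∃ b ∈ Set.Icc βmin βmax,
      ℓ b = min (ℓ βmin + (j:ℝ) * lam) (ℓ βmax) := by
    intro j
    have hmem : min (ℓ βmin + (j:ℝ) * lam) (ℓ βmax) ∈ Set.Icc (ℓ βmin) (ℓ βmax) := by
      constructor
      · refine le_min ?_ (hmono hmm hmx hβ.le)
        have : (0:ℝ) ≤ (j:ℝ) * lam := by positivity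
        linarith
      · exact min_le_right _ _
    obtain ⟨b, hb1, hb2⟩ := intermediate_value_Icc hβ.le hcont hmem
    exact ⟨b, hb1, hb2⟩
  choose βnet hβnetmem hβnetval using hnet
  set U : Finset X := (Finset.range (r + 1)).biUnion
    (fun j => (ξopt (βnet j)).support) with hU
  have hrr : (0:ℝ) < (r:ℝ) + 1 := by positivity
  obtain ⟨ξbar, hbsupp, hbw⟩ : ∃ ξbar : Design X, ξbar.support = U ∧
      ξbar.w = fun x => ((r:ℝ) + 1)⁻¹ * ∑ j ∈ Finset.range (r + 1),
        (ξopt (βnet j)).w x := by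
    refine ⟨⟨U, fun x => ((r:ℝ) + 1)⁻¹ * ∑ j ∈ Finset.range (r + 1),
      (ξopt (βnet j)).w x, ?_, ?_, ?_⟩, rfl, rfl⟩
    · intro x hx
      obtain ⟨j, hj, hxj⟩ := Finset.mem_biUnion.1 hx
      have hpos := (ξopt (βnet j)).w_pos x hxj
      have hsum : 0 < ∑ j' ∈ Finset.range (r + 1), (ξopt (βnet j')).w x :=
        Finset.sum_pos' (fun j' _ => (ξopt (βnet j')).w_nonneg x) ⟨j, hj, hpos⟩
      positivity
    · intro x hx
      have hz : ∀ j ∈ Finset.range (r + 1), (ξopt (βnet j)).w x = 0 := by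
        intro j hj
        exact (ξopt (βnet j)).w_zero x fun hxj => hx (Finset.mem_biUnion.2 ⟨j, hj, hxj⟩)
      show ((r:ℝ) + 1)⁻¹ * ∑ j ∈ Finset.range (r + 1), (ξopt (βnet j)).w x = 0
      rw [Finset.sum_eq_zero hz, mul_zero]
    · have hcomm : ∑ x ∈ U, ∑ j ∈ Finset.range (r + 1), (ξopt (βnet j)).w x
          = ∑ j ∈ Finset.range (r + 1), ∑ x ∈ U, (ξopt (βnet j)).w x :=
        Finset.sum_comm
      have hone : ∀ j ∈ Finset.range (r + 1),
          ∑ x ∈ U, (ξopt (βnet j)).w x = 1 := by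
        intro j hj
        rw [← (ξopt (βnet j)).sum_one]
        exact (Finset.sum_subset (Finset.subset_biUnion_of_mem _ hj)
          (fun x _ hxn => (ξopt (βnet j)).w_zero x hxn)).symm
      calc ∑ x ∈ U, ((r:ℝ) + 1)⁻¹ * ∑ j ∈ Finset.range (r + 1), (ξopt (βnet j)).w x
          = ((r:ℝ) + 1)⁻¹ * ∑ x ∈ U, ∑ j ∈ Finset.range (r + 1), (ξopt (βnet j)).w x := by
            rw [← Finset.mul_sum]
        _ = ((r:ℝ) + 1)⁻¹ * ∑ j ∈ Finset.range (r + 1), ∑ x ∈ U, (ξopt (βnet j)).w x := by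
            rw [hcomm]
        _ = ((r:ℝ) + 1)⁻¹ * ∑ _j ∈ Finset.range (r + 1), (1:ℝ) := by
            rw [Finset.sum_congr rfl hone]
        _ = 1 := by
            rw [Finset.sum_const, Finset.card_range, nsmul_eq_mul, mul_one]
            push_cast
            field_simp
  -- lower bound for the maximin value of the mixture
  have hlow : ∀ β : Set.Icc βmin βmax, ((r:ℝ) + 1)⁻¹ ^ m * (1 / 2)
      ≤ (infoMat f ξbar (β : ℝ)).det / (infoMat f (ξopt (β : ℝ)) (β : ℝ)).det := by
    rintro ⟨β, hβm⟩
    have hu1 : ℓ βmin ≤ ℓ β := hmono hmm hβm hβm.1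
    have hu2 : ℓ β ≤ ℓ βmax := hmono hβm hmx hβm.2
    set j : ℕ := ⌊(ℓ β - ℓ βmin) / lam⌋₊ with hjdef
    have hjr : j ≤ r := by
      have h1 : (ℓ β - ℓ βmin) / lam ≤ L / lam :=
        (div_le_div_iff_of_pos_right hlam).2 (by rw [hLdef]; linarith)
      calc j ≤ ⌊L / lam⌋₊ := Nat.floor_le_floor h1
        _ ≤ ⌈L / lam⌉₊ := Nat.floor_le_ceil _
    have hjmem : j ∈ Finset.range (r + 1) := Finset.mem_range.2 (Nat.lt_succ_of_le hjr)
    have hjlam : ℓ βmin + (j:ℝ) * lam ≤ ℓ β := by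
      have h1 : ((j:ℝ)) ≤ (ℓ β - ℓ βmin) / lam :=
        Nat.floor_le (div_nonneg (by linarith) hlam.le)
      have h2 := (le_div_iff₀ hlam).1 h1
      linarith
    have hjlt : ℓ β < ℓ βmin + ((j:ℝ) + 1) * lam := by
      have h1 := Nat.lt_floor_add_one ((ℓ β - ℓ βmin) / lam)
      have h2 := (div_lt_iff₀ hlam).1 h1
      linarith
    have hval : ℓ (βnet j) = ℓ βmin + (j:ℝ) * lam := by
      rw [hβnetval j]
      exact min_eq_left (by linarith)
    have hclose : |ℓ β - ℓ (βnet j)| ≤ lam := by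
      rw [hval, abs_of_nonneg (by linarith)]; linarith
    have h25' := h25 β hβm (βnet j) (hβnetmem j) hclose
    have hfac : (0:ℝ) < m.factorial := by positivity
    have hDcomp : ((r:ℝ) + 1)⁻¹ ^ m * (infoMat f (ξopt (βnet j)) β).det
        ≤ (infoMat f ξbar β).det := by
      rw [← mul_le_mul_iff_right₀ hfac]
      calc (m.factorial:ℝ) * (((r:ℝ) + 1)⁻¹ ^ m * (infoMat f (ξopt (βnet j)) β).det)
          = ((r:ℝ) + 1)⁻¹ ^ m * ((m.factorial:ℝ) * (infoMat f (ξopt (βnet j)) β).det) := by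
            ring
        _ = ((r:ℝ) + 1)⁻¹ ^ m * ∑ g ∈ Fintype.piFinset
              (fun _ : Fin m => (ξopt (βnet j)).support),
              (∏ i, (ξopt (βnet j)).w (g i)) * detIm f g β := by
            rw [factorial_mul_det_infoMat]
        _ = ∑ g ∈ Fintype.piFinset (fun _ : Fin m => (ξopt (βnet j)).support),
              (((r:ℝ) + 1)⁻¹ ^ m * ∏ i, (ξopt (βnet j)).w (g i)) * detIm f g β := by
            rw [Finset.mul_sum]; exact Finset.sum_congr rfl fun g _ => by ring
        _ ≤ ∑ g ∈ Fintype.piFinset (fun _ : Fin m => (ξopt (βnet j)).support),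
              (∏ i, ξbar.w (g i)) * detIm f g β := by
            refine Finset.sum_le_sum fun g hg => ?_
            refine mul_le_mul_of_nonneg_right ?_ (detIm_nonneg f g β)
            have he : ((r:ℝ) + 1)⁻¹ ^ m * ∏ i, (ξopt (βnet j)).w (g i)
                = ∏ i : Fin m, (((r:ℝ) + 1)⁻¹ * (ξopt (βnet j)).w (g i)) := by
              rw [Finset.prod_mul_distrib, Finset.prod_const, Finset.card_univ,
                Fintype.card_fin]
            rw [he]
            refine Finset.prod_le_prod (fun i _ => by
              have := (ξopt (βnet j)).w_nonneg (g i); positivity) (fun i _ => ?_)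
            rw [hbw]
            refine mul_le_mul_of_nonneg_left ?_ (by positivity)
            exact Finset.single_le_sum
              (fun j' _ => (ξopt (βnet j')).w_nonneg (g i)) hjmem
        _ ≤ ∑ g ∈ Fintype.piFinset (fun _ : Fin m => ξbar.support),
              (∏ i, ξbar.w (g i)) * detIm f g β := by
            refine Finset.sum_le_sum_of_subset_of_nonneg ?_ (fun g _ _ =>
              mul_nonneg (Finset.prod_nonneg fun i _ => ξbar.w_nonneg _)
                (detIm_nonneg f g β))
            refine Fintype.piFinset_subset _ _ fun i => ?_
            rw [hbsupp, hU]
            exact Finset.subset_biUnion_of_mem (fun j => (ξopt (βnet j)).support) hjmem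
        _ = (m.factorial:ℝ) * (infoMat f ξbar β).det :=
            (factorial_mul_det_infoMat f ξbar β).symm
    have hDβ : 0 < (infoMat f (ξopt β) β).det := hdetpos β hβm
    calc ((r:ℝ) + 1)⁻¹ ^ m * (1 / 2)
        ≤ ((r:ℝ) + 1)⁻¹ ^ m *
            ((infoMat f (ξopt (βnet j)) β).det / (infoMat f (ξopt β) β).det) :=
          mul_le_mul_of_nonneg_left h25' (by positivity)
      _ = (((r:ℝ) + 1)⁻¹ ^ m * (infoMat f (ξopt (βnet j)) β).det)
            / (infoMat f (ξopt β) β).det := by rw [mul_div_assoc]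
      _ ≤ (infoMat f ξbar β).det / (infoMat f (ξopt β) β).det :=
          (div_le_div_iff_of_pos_right hDβ).2 hDcomp
  have hΦbar := le_ciInf hlow
  have hmain : ((r:ℝ) + 1)⁻¹ ^ m * (1 / 2) ≤ c₀ * m * (c₁ / δ ^ γ) :=
    le_trans hΦbar (le_trans (hopt ξbar) hΦstar)
  -- final arithmetic contradiction
  have hLγ : (0:ℝ) < L ^ γ := Real.rpow_pos_of_pos hLpos γ
  have hδγ : δ ^ γ = L ^ γ / (2 * ((K:ℝ) + 1)) ^ γ := by
    rw [hδdef, Real.div_rpow hLpos.le (by positivity)]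
  have hUeq : c₀ * m * (c₁ / δ ^ γ) = A / L ^ γ := by
    rw [hδγ, hA]
    field_simp
  have hrb : (r:ℝ) + 1 ≤ L * (1 / lam + 2) := by
    have h1 : (r:ℝ) < L / lam + 1 := by
      rw [hr]
      exact Nat.ceil_lt_add_one (by positivity)
    have h2 : L * (1 / lam + 2) = L / lam + 2 * L := by
      rw [mul_add, mul_one_div]; ring
    linarith
  have hpowr : ((r:ℝ) + 1) ^ m ≤ (L * (1 / lam + 2)) ^ m :=
    pow_le_pow_left₀ (by positivity) hrb m
  have hfin : 2 * ((r:ℝ) + 1) ^ m * A < L ^ γ := by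
    have h1 : L ^ γ = L ^ m * L ^ (γ - (m:ℝ)) := by
      rw [← Real.rpow_natCast L m, ← Real.rpow_add hLpos]
      congr 1
      ring
    have h2 : 2 * A * ((r:ℝ) + 1) ^ m ≤ 2 * A * (L * (1 / lam + 2)) ^ m :=
      mul_le_mul_of_nonneg_left hpowr (by positivity)
    have h4 : C * L ^ m < L ^ (γ - (m:ℝ)) * L ^ m :=
      mul_lt_mul_of_pos_right hLC (by positivity)
    calc 2 * ((r:ℝ) + 1) ^ m * A = 2 * A * ((r:ℝ) + 1) ^ m := by ring
      _ ≤ 2 * A * (L * (1 / lam + 2)) ^ m := h2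
      _ = C * L ^ m := by rw [mul_pow, hC]; ring
      _ < L ^ (γ - (m:ℝ)) * L ^ m := h4
      _ = L ^ γ := by rw [h1]; ring
  rw [hUeq, inv_pow, le_div_iff₀ hLγ] at hmain
  have hne : ((r:ℝ) + 1) ^ m ≠ 0 := by positivity
  have hfinal : L ^ γ ≤ 2 * ((r:ℝ) + 1) ^ m * A := by
    calc L ^ γ = 2 * ((r:ℝ) + 1) ^ m * ((((r:ℝ) + 1) ^ m)⁻¹ * (1 / 2) * L ^ γ) := by
          field_simp
      _ ≤ 2 * ((r:ℝ) + 1) ^ m * A := mul_le_mul_of_nonneg_left hmain (by positivity)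
  linarith
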